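/- arXiv:2503.13788 — 6 statements merged into one kernel-verified Lean document; each statement's English description precedes it below -/
import Mathlib

section
/- Let a, b ∈ ℝ² be linearly independent vectors and α, β ≥ 0. Then the set C = { (α‖x‖² + a·x, β‖x‖² + b·x) : x ∈ ℝ², ‖x‖² ≤ 1 } ⊆ ℝ² is convex. -/
open Matrix

theorem stmt0 (a b : Fin 2 → ℝ) (hab : LinearIndependent ℝ ![a, b])
    (α β : ℝ) (hα : 0 ≤ α) (hβ : 0 ≤ β) :
    Convex ℝ {p : ℝ × ℝ | ∃ x : Fin 2 → ℝ, x ⬝ᵥ x ≤ 1 ∧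
      p = (α * (x ⬝ᵥ x) + a ⬝ᵥ x, β * (x ⬝ᵥ x) + b ⬝ᵥ x)} := by
  -- get w with a ⬝ᵥ w = α, b ⬝ᵥ w = β
  have hM : IsUnit (Matrix.of ![a, b]) := by
    rw [← Matrix.linearIndependent_rows_iff_isUnit]
    exact hab
  obtain ⟨w, hw⟩ := Matrix.mulVec_surjective_iff_isUnit.2 hM ![α, β]
  have hwa : a ⬝ᵥ w = α := congrFun hw 0
  have hwb : b ⬝ᵥ w = β := congrFun hw 1
  -- the relaxed set
  have hset : {p : ℝ × ℝ | ∃ x : Fin 2 → ℝ, x ⬝ᵥ x ≤ 1 ∧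
      p = (α * (x ⬝ᵥ x) + a ⬝ᵥ x, β * (x ⬝ᵥ x) + b ⬝ᵥ x)} =
      {p : ℝ × ℝ | ∃ x : Fin 2 → ℝ, ∃ t : ℝ, x ⬝ᵥ x ≤ t ∧ t ≤ 1 ∧
      p = (α * t + a ⬝ᵥ x, β * t + b ⬝ᵥ x)} := by
    ext p
    simp only [Set.mem_setOf_eq]
    constructor
    · rintro ⟨x, hx, rfl⟩
      exact ⟨x, x ⬝ᵥ x, le_refl _, hx, rfl⟩
    · rintro ⟨x, t, hxt, ht1, rfl⟩
      -- solve for exact point via IVT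
      have ht0 : 0 ≤ t := le_trans (by
        simp only [dotProduct, Fin.sum_univ_two]
        nlinarith [mul_self_nonneg (x 0), mul_self_nonneg (x 1)]) hxt
      set g : ℝ → ℝ := fun s =>
        (x + (t - s) • w) ⬝ᵥ (x + (t - s) • w) - s with hg
      have hcont : ContinuousOn g (Set.Icc 0 t) := by
        apply Continuous.continuousOn
        simp only [hg, dotProduct, Fin.sum_univ_two, Pi.add_apply,
          Pi.smul_apply, smul_eq_mul]
        continuity
      have hgt : g t ≤ 0 := by simpa [hg] using hxt
      have hg0 : 0 ≤ g 0 := by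
        have : g 0 = (x 0 + t * w 0) ^ 2 + (x 1 + t * w 1) ^ 2 := by
          simp [hg, dotProduct, Fin.sum_univ_two]; ring
        rw [this]; positivity
      have := intermediate_value_Icc' ht0 hcont
      obtain ⟨s, hs, hgs⟩ := this ⟨hgt, hg0⟩
      rw [hg] at hgs
      simp only at hgs
      refine ⟨x + (t - s) • w, le_trans ?_ ht1, ?_⟩
      · have : (x + (t - s) • w) ⬝ᵥ (x + (t - s) • w) = s := by linarith
        rw [this]; exact hs.2
      · have hxx : (x + (t - s) • w) ⬝ᵥ (x + (t - s) • w) = s := by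
          linarith
        have ha' : a ⬝ᵥ (x + (t - s) • w) = a ⬝ᵥ x + (t - s) * α := by
          rw [dotProduct_add, dotProduct_smul, hwa, smul_eq_mul]
        have hb' : b ⬝ᵥ (x + (t - s) • w) = b ⬝ᵥ x + (t - s) * β := by
          rw [dotProduct_add, dotProduct_smul, hwb, smul_eq_mul]
        rw [hxx, ha', hb', Prod.mk.injEq]
        constructor <;> ring
  rw [hset]
  rintro p ⟨x, t, hxt, ht1, rfl⟩ q ⟨y, u, hyu, hu1, rfl⟩ c d hc hd hcd
  refine ⟨c • x + d • y, c * t + d * u, ?_, ?_, ?_⟩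
  · simp only [dotProduct, Fin.sum_univ_two, Pi.add_apply, Pi.smul_apply,
      smul_eq_mul] at hxt hyu ⊢
    nlinarith [mul_nonneg (mul_nonneg hc hd) (sq_nonneg (x 0 - y 0)),
      mul_nonneg (mul_nonneg hc hd) (sq_nonneg (x 1 - y 1)),
      mul_le_mul_of_nonneg_left hxt hc, mul_le_mul_of_nonneg_left hyu hd]
  · nlinarith
  · simp only [Prod.smul_mk, smul_eq_mul, Prod.mk_add_mk, Prod.mk.injEq,
      dotProduct, Fin.sum_univ_two, Pi.add_apply, Pi.smul_apply]
    constructor <;> ring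
end

section
/- For any c ∈ ℝ², the set C' = { ‖x‖² · c + x : x ∈ ℝ², ‖x‖² ≤ 1 } ⊆ ℝ² is convex. -/
open Matrix

/-- If `‖y - t•c‖² ≤ t` with `0 ≤ t ≤ 1`, then `y` is in the set
(upgrade inequality to equality via IVT). -/
lemma mem_of_le (c y : Fin 2 → ℝ) (t : ℝ) (ht0 : 0 ≤ t) (ht1 : t ≤ 1)
    (h : (y - t • c) ⬝ᵥ (y - t • c) ≤ t) :
    ∃ x : Fin 2 → ℝ, x ⬝ᵥ x ≤ 1 ∧ y = (x ⬝ᵥ x) • c + x := by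
  set q : ℝ → ℝ := fun s => (y - s • c) ⬝ᵥ (y - s • c) - s with hq
  have hcont : ContinuousOn q (Set.Icc 0 t) := by
    apply Continuous.continuousOn
    simp only [hq, dotProduct, Fin.sum_univ_two, Pi.sub_apply, Pi.smul_apply, smul_eq_mul]
    fun_prop
  have hq0 : 0 ≤ q 0 := by
    simp only [hq, dotProduct, Fin.sum_univ_two, Pi.sub_apply, Pi.smul_apply, smul_eq_mul]
    nlinarith [mul_self_nonneg (y 0), mul_self_nonneg (y 1)]
  have hqt : q t ≤ 0 := by simp only [hq]; linarith
  have : (0 : ℝ) ∈ Set.Icc (q t) (q 0) := ⟨hqt, hq0⟩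
  obtain ⟨s, hs, hqs⟩ := intermediate_value_Icc' ht0 hcont this
  refine ⟨y - s • c, ?_, ?_⟩
  · have : (y - s • c) ⬝ᵥ (y - s • c) = s := by
      have := hqs; simp only [hq] at this; linarith
    rw [this]; exact le_trans hs.2 ht1
  · have hxs : (y - s • c) ⬝ᵥ (y - s • c) = s := by
      have := hqs; simp only [hq] at this; linarith
    rw [hxs]
    funext i
    simp [Pi.add_apply, Pi.sub_apply, Pi.smul_apply]

theorem stmt1 (c : Fin 2 → ℝ) :
    Convex ℝ {y : Fin 2 → ℝ | ∃ x : Fin 2 → ℝ, x ⬝ᵥ x ≤ 1 ∧ y = (x ⬝ᵥ x) • c + x} := by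
  intro y₁ hy₁ y₂ hy₂ a b ha hb hab
  obtain ⟨x₁, hx₁, rfl⟩ := hy₁
  obtain ⟨x₂, hx₂, rfl⟩ := hy₂
  set t₁ := x₁ ⬝ᵥ x₁ with ht₁
  set t₂ := x₂ ⬝ᵥ x₂ with ht₂
  have ht₁0 : 0 ≤ t₁ := by
    simp only [ht₁, dotProduct, Fin.sum_univ_two, smul_eq_mul]
    nlinarith [mul_self_nonneg (x₁ 0), mul_self_nonneg (x₁ 1)]
  have ht₂0 : 0 ≤ t₂ := by
    simp only [ht₂, dotProduct, Fin.sum_univ_two, smul_eq_mul]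
    nlinarith [mul_self_nonneg (x₂ 0), mul_self_nonneg (x₂ 1)]
  set t := a * t₁ + b * t₂ with ht
  have ht0 : 0 ≤ t := by positivity
  have ht1 : t ≤ 1 := by nlinarith
  set Y := a • (t₁ • c + x₁) + b • (t₂ • c + x₂) with hY
  have hYd : Y - t • c = a • x₁ + b • x₂ := by
    funext i
    simp only [hY, ht, Pi.add_apply, Pi.sub_apply, Pi.smul_apply, smul_eq_mul]
    ring
  have key : (Y - t • c) ⬝ᵥ (Y - t • c) ≤ t := by
    rw [hYd]
    show (a • x₁ + b • x₂) ⬝ᵥ (a • x₁ + b • x₂) ≤ a * t₁ + b * t₂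
    simp only [ht₁, ht₂, dotProduct, Fin.sum_univ_two, Pi.add_apply, Pi.smul_apply,
      smul_eq_mul]
    nlinarith [mul_self_nonneg (x₁ 0 - x₂ 0), mul_self_nonneg (x₁ 1 - x₂ 1),
      mul_self_nonneg (a * x₁ 0 - b * x₂ 0), mul_self_nonneg (a * x₁ 1 - b * x₂ 1),
      mul_nonneg ha hb]
    -- fallback if nlinarith fails
  exact mem_of_le c Y t ht0 ht1 key
end

section
/- Let c, z ∈ ℝ² and ζ ∈ ℝ with ‖z‖² ≤ ζ ≤ 1. Define f₁(μ) = ‖c‖²μ² + (2 c·z + 1)μ + (‖z‖² − ζ) and f₂(μ) = ‖c‖²μ² + (2 c·z)μ + (‖z‖² − 1). Then there exists μ ≥ 0 with f₁(μ) = 0 and f₂(μ) ≤ 0. -/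
open Matrix

theorem stmt2 (c z : Fin 2 → ℝ) (ζ : ℝ) (h1 : z ⬝ᵥ z ≤ ζ) (h2 : ζ ≤ 1) :
    ∃ μ : ℝ, 0 ≤ μ ∧
      (c ⬝ᵥ c) * μ ^ 2 + (2 * (c ⬝ᵥ z) + 1) * μ + (z ⬝ᵥ z - ζ) = 0 ∧
      (c ⬝ᵥ c) * μ ^ 2 + (2 * (c ⬝ᵥ z)) * μ + (z ⬝ᵥ z - 1) ≤ 0 := by
  set a := c ⬝ᵥ c with ha
  have ha0 : 0 ≤ a := by
    have : a = c 0 * c 0 + c 1 * c 1 := by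
      simp [ha, dotProduct, Fin.sum_univ_two]
    nlinarith [sq_nonneg (c 0), sq_nonneg (c 1)]
  set b := 2 * (c ⬝ᵥ z) + 1 with hb
  set k := z ⬝ᵥ z - ζ with hk
  have hk0 : k ≤ 0 := by simp only [hk]; linarith
  have hz1 : z ⬝ᵥ z ≤ 1 := le_trans h1 h2
  rcases eq_or_lt_of_le ha0 with hA | hA
  · -- a = 0, so c = 0
    have hc : c = 0 := dotProduct_self_eq_zero.mp hA.symm
    have hcz : c ⬝ᵥ z = 0 := by simp [hc]
    refine ⟨-k, by linarith, ?_, ?_⟩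
    · rw [← hA, hb, hcz]; ring
    · rw [← hA, hcz]
      simp only [hk]
      nlinarith
  · set D := b ^ 2 - 4 * a * k with hD
    have hD0 : 0 ≤ D := by nlinarith
    set s := Real.sqrt D with hs
    have hs2 : s ^ 2 = D := Real.sq_sqrt hD0
    have hs0 : 0 ≤ s := Real.sqrt_nonneg _
    have hsb : b ≤ s := by nlinarith
    have hμ : 0 ≤ (s - b) / (2 * a) := div_nonneg (by linarith) (by linarith)
    refine ⟨(s - b) / (2 * a), hμ, ?_, ?_⟩
    · have : a * ((s - b) / (2 * a)) ^ 2 + b * ((s - b) / (2 * a)) + k = 0 := by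
        field_simp
        nlinarith [hs2]
      linarith [this]
    · have h0 : a * ((s - b) / (2 * a)) ^ 2 + b * ((s - b) / (2 * a)) + k = 0 := by
        field_simp
        nlinarith [hs2]
      have hkk : k = z ⬝ᵥ z - ζ := hk
      nlinarith [h0, hμ]
end

section
/- Let x₁, x₂ be in the closed unit ball of ℝ², λ ∈ [0,1], and c ∈ ℝ². Then there exists y in the closed unit ball of ℝ² such that ‖y‖²·c + y = (λ‖x₁‖² + (1−λ)‖x₂‖²)·c + λx₁ + (1−λ)x₂. -/
open Matrix

lemma quad_aux (A B C : ℝ) (hA : 0 < A) (hC : C ≤ 0) :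
    ∃ t : ℝ, 0 ≤ t ∧ A * t ^ 2 + B * t + C = 0 := by
  have hAC : 0 ≤ A * (-C) := mul_nonneg hA.le (by linarith)
  have hD : 0 ≤ B ^ 2 - 4 * A * C := by nlinarith [sq_nonneg B]
  have hr2 : Real.sqrt (B ^ 2 - 4 * A * C) ^ 2 = B ^ 2 - 4 * A * C := Real.sq_sqrt hD
  have hBr : B ≤ Real.sqrt (B ^ 2 - 4 * A * C) := by
    calc B ≤ |B| := le_abs_self B
      _ = Real.sqrt (B ^ 2) := (Real.sqrt_sq_eq_abs B).symm
      _ ≤ Real.sqrt (B ^ 2 - 4 * A * C) := Real.sqrt_le_sqrt (by nlinarith)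
  refine ⟨(-B + Real.sqrt (B ^ 2 - 4 * A * C)) / (2 * A),
    div_nonneg (by linarith) (by linarith), ?_⟩
  set s := Real.sqrt (B ^ 2 - 4 * A * C) with hs
  field_simp
  linear_combination hr2

theorem stmt4 (x₁ x₂ : Fin 2 → ℝ) (h1 : x₁ ⬝ᵥ x₁ ≤ 1) (h2 : x₂ ⬝ᵥ x₂ ≤ 1)
    (l : ℝ) (hl0 : 0 ≤ l) (hl1 : l ≤ 1) (c : Fin 2 → ℝ) :
    ∃ y : Fin 2 → ℝ, y ⬝ᵥ y ≤ 1 ∧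
      (y ⬝ᵥ y) • c + y =
        (l * (x₁ ⬝ᵥ x₁) + (1 - l) * (x₂ ⬝ᵥ x₂)) • c + (l • x₁ + (1 - l) • x₂) := by
  have hdiff : (0:ℝ) ≤ (x₁ - x₂) ⬝ᵥ (x₁ - x₂) :=
    Finset.sum_nonneg fun i _ => mul_self_nonneg _
  have hconv : 0 ≤ l * (1 - l) * ((x₁ - x₂) ⬝ᵥ (x₁ - x₂)) :=
    mul_nonneg (mul_nonneg hl0 (by linarith)) hdiff
  have hkey : (l * (x₁ ⬝ᵥ x₁) + (1 - l) * (x₂ ⬝ᵥ x₂)) -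
      (l • x₁ + (1 - l) • x₂) ⬝ᵥ (l • x₁ + (1 - l) • x₂)
      = l * (1 - l) * ((x₁ - x₂) ⬝ᵥ (x₁ - x₂)) := by
    simp only [dotProduct_add, add_dotProduct, dotProduct_smul, smul_dotProduct,
      sub_dotProduct, dotProduct_sub, smul_eq_mul, dotProduct_comm x₂ x₁]
    ring
  have hvv : (l • x₁ + (1 - l) • x₂) ⬝ᵥ (l • x₁ + (1 - l) • x₂) ≤
      l * (x₁ ⬝ᵥ x₁) + (1 - l) * (x₂ ⬝ᵥ x₂) := by linarith
  have hs1 : l * (x₁ ⬝ᵥ x₁) + (1 - l) * (x₂ ⬝ᵥ x₂) ≤ 1 := by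
    have e1 : l * (x₁ ⬝ᵥ x₁) ≤ l * 1 := mul_le_mul_of_nonneg_left h1 hl0
    have e2 : (1 - l) * (x₂ ⬝ᵥ x₂) ≤ (1 - l) * 1 :=
      mul_le_mul_of_nonneg_left h2 (by linarith)
    linarith
  by_cases hc : c = 0
  · refine ⟨l • x₁ + (1 - l) • x₂, le_trans hvv hs1, ?_⟩
    simp [hc]
  · have hA : 0 < c ⬝ᵥ c := by
      rcases lt_or_eq_of_le (Finset.sum_nonneg fun i _ => mul_self_nonneg (c i) :
        (0:ℝ) ≤ c ⬝ᵥ c) with h | h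
      · exact h
      · exact absurd ((dotProduct_self_eq_zero).mp h.symm) hc
    obtain ⟨t, ht0, hroot⟩ := quad_aux (c ⬝ᵥ c)
      (2 * ((l • x₁ + (1 - l) • x₂) ⬝ᵥ c) + 1)
      ((l • x₁ + (1 - l) • x₂) ⬝ᵥ (l • x₁ + (1 - l) • x₂) -
        (l * (x₁ ⬝ᵥ x₁) + (1 - l) * (x₂ ⬝ᵥ x₂))) hA (by linarith)
    have hyy : ((l • x₁ + (1 - l) • x₂) + t • c) ⬝ᵥ ((l • x₁ + (1 - l) • x₂) + t • c) =
        (l * (x₁ ⬝ᵥ x₁) + (1 - l) * (x₂ ⬝ᵥ x₂)) - t := by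
      simp only [dotProduct_add, add_dotProduct, dotProduct_smul, smul_dotProduct,
        smul_eq_mul, dotProduct_comm c x₁, dotProduct_comm c x₂,
        dotProduct_comm x₂ x₁] at hroot ⊢
      linear_combination hroot
    refine ⟨(l • x₁ + (1 - l) • x₂) + t • c, ?_, ?_⟩
    · rw [hyy]; linarith
    · rw [hyy]; module
end

section
/- Let E ∈ ℝ² be nonzero, R > 0, L > 0, ω ∈ ℝ, and Imax > 0. Define A = [[−R/L, ω], [−ω, −R/L]] and, for I ∈ ℝ² with ‖I‖ ≤ Imax, set P(I) = (3/2)R‖I‖² + (3/2)E·I and Q(I) = (3/2)ωL‖I‖² + (3/2)(JᵀE)·I where J = [[0,1],[−1,0]]. Then the set { (P(I), Q(I)) : ‖I‖ ≤ Imax } ⊆ ℝ² is convex. -/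
set_option maxHeartbeats 1000000

lemma key13 (R ω L Imax e0 e1 a0 a1 b0 b1 l m : ℝ)
    (hR : 0 < R) (he : 0 < e0^2 + e1^2)
    (hA : a0^2 + a1^2 ≤ Imax^2) (hB : b0^2 + b1^2 ≤ Imax^2)
    (hl : 0 ≤ l) (hm : 0 ≤ m) (hlm : l + m = 1) :
    ∃ u v : ℝ, u^2 + v^2 ≤ Imax^2 ∧
      (3/2)*R*(u^2+v^2) + (3/2)*(e0*u+e1*v)
        = l*((3/2)*R*(a0^2+a1^2) + (3/2)*(e0*a0+e1*a1))
          + m*((3/2)*R*(b0^2+b1^2) + (3/2)*(e0*b0+e1*b1)) ∧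
      (3/2)*(ω*L)*(u^2+v^2) + (3/2)*((-e1)*u+e0*v)
        = l*((3/2)*(ω*L)*(a0^2+a1^2) + (3/2)*((-e1)*a0+e0*a1))
          + m*((3/2)*(ω*L)*(b0^2+b1^2) + (3/2)*((-e1)*b0+e0*b1)) := by
  have he' : e0^2 + e1^2 ≠ 0 := ne_of_gt he
  obtain ⟨w0, hw0⟩ : ∃ x : ℝ, x = (R*e0 - ω*L*e1)/(e0^2+e1^2) := ⟨_, rfl⟩
  obtain ⟨w1, hw1⟩ : ∃ x : ℝ, x = (R*e1 + ω*L*e0)/(e0^2+e1^2) := ⟨_, rfl⟩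
  obtain ⟨k, hk'⟩ : ∃ x : ℝ, x = (R^2 + (ω*L)^2)/(e0^2+e1^2) := ⟨_, rfl⟩
  have hk : 0 < k := hk' ▸ div_pos (by nlinarith) he
  have hw : w0^2 + w1^2 = k := by rw [hw0, hw1, hk']; field_simp; ring
  have hew : e0*w0 + e1*w1 = R := by rw [hw0, hw1]; field_simp; ring
  have hfw : (-e1)*w0 + e0*w1 = ω*L := by rw [hw0, hw1]; field_simp; ring
  obtain ⟨u, hu⟩ : ∃ x : ℝ, x = l*a0 + m*b0 := ⟨_, rfl⟩
  obtain ⟨v, hv⟩ : ∃ x : ℝ, x = l*a1 + m*b1 := ⟨_, rfl⟩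
  obtain ⟨t, ht⟩ : ∃ x : ℝ, x = l*(a0^2+a1^2) + m*(b0^2+b1^2) := ⟨_, rfl⟩
  have hC : u^2 + v^2 - t ≤ 0 := by
    rw [hu, hv, ht]
    nlinarith [mul_nonneg hl hm, sq_nonneg (a0-b0), sq_nonneg (a1-b1)]
  obtain ⟨Bq, hBq⟩ : ∃ x : ℝ, x = 2*(w0*u+w1*v) + 1 := ⟨_, rfl⟩
  obtain ⟨D, hD'⟩ : ∃ x : ℝ, x = Bq^2 - 4*k*(u^2+v^2-t) := ⟨_, rfl⟩
  have hD : 0 ≤ D := by nlinarith [sq_nonneg Bq, mul_nonneg hk.le (neg_nonneg.2 hC)]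
  have hDB : Bq^2 ≤ D := by nlinarith [mul_nonneg hk.le (neg_nonneg.2 hC)]
  have hs2 : Real.sqrt D ^ 2 = D := Real.sq_sqrt hD
  have hsB : Bq ≤ Real.sqrt D := by
    calc Bq ≤ |Bq| := le_abs_self _
    _ = Real.sqrt (Bq^2) := (Real.sqrt_sq_eq_abs _).symm
    _ ≤ Real.sqrt D := Real.sqrt_le_sqrt hDB
  obtain ⟨s, hs'⟩ : ∃ x : ℝ, x = Real.sqrt D := ⟨_, rfl⟩
  rw [← hs'] at hs2 hsB
  obtain ⟨δ, hδ'⟩ : ∃ x : ℝ, x = (Bq - s)/(2*k) := ⟨_, rfl⟩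
  have hδ0 : δ ≤ 0 := hδ' ▸ div_nonpos_of_nonpos_of_nonneg (by linarith) (by linarith)
  have h2k : 2*k*δ = Bq - s := by rw [hδ']; field_simp
  have h4 : (4:ℝ)*k ≠ 0 := by positivity
  have h9 : (4*k) * (k*δ^2 - Bq*δ + (u^2+v^2-t)) = 0 := by
    linear_combination (2*k*δ - Bq - s)*h2k + hs2 + hD'
  have hroot : k*δ^2 - Bq*δ + (u^2+v^2-t) = 0 := (mul_eq_zero.mp h9).resolve_left h4
  have hquad : (u - δ*w0)^2 + (v - δ*w1)^2 = t + δ := by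
    linear_combination hroot + δ*hBq + δ^2*hw
  refine ⟨u - δ*w0, v - δ*w1, ?_, ?_, ?_⟩
  · have htI : t ≤ Imax^2 := by rw [ht]; nlinarith
    rw [hquad]; linarith
  · rw [hquad, hu, hv, ht]
    linear_combination (3/2)*(-(δ))*hew
  · rw [hquad, hu, hv, ht]
    linear_combination (3/2)*(-(δ))*hfw

open Matrix

theorem stmt13 (R L ω Imax : ℝ) (hR : 0 < R) (hL : 0 < L) (hImax : 0 < Imax)
    (E : Fin 2 → ℝ) (hE : E ≠ 0)
    (J : Matrix (Fin 2) (Fin 2) ℝ) (hJ : J = !![0, 1; -1, 0]) :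
    Convex ℝ {p : ℝ × ℝ | ∃ I : Fin 2 → ℝ, I ⬝ᵥ I ≤ Imax ^ 2 ∧
      p = ((3 / 2) * R * (I ⬝ᵥ I) + (3 / 2) * (E ⬝ᵥ I),
           (3 / 2) * (ω * L) * (I ⬝ᵥ I) + (3 / 2) * ((Jᵀ.mulVec E) ⬝ᵥ I))} := by
  intro p1 hp1 p2 hp2 l m hl hm hlm
  simp only [Set.mem_setOf_eq] at hp1 hp2 ⊢
  obtain ⟨A, hA, rfl⟩ := hp1
  obtain ⟨B, hB, rfl⟩ := hp2
  have he : 0 < E 0 ^ 2 + E 1 ^ 2 := by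
    have h01 : E 0 ≠ 0 ∨ E 1 ≠ 0 := by
      by_contra h
      push_neg at h
      exact hE (funext fun i => by fin_cases i <;> simp [h.1, h.2])
    rcases h01 with h | h
    · nlinarith [pow_two_pos_of_ne_zero h, sq_nonneg (E 1)]
    · nlinarith [pow_two_pos_of_ne_zero h, sq_nonneg (E 0)]
  have hA' : A 0 ^ 2 + A 1 ^ 2 ≤ Imax ^ 2 := by
    have : A ⬝ᵥ A = A 0 ^ 2 + A 1 ^ 2 := by
      simp [dotProduct, Fin.sum_univ_two]; ring
    linarith [this ▸ hA]
  have hB' : B 0 ^ 2 + B 1 ^ 2 ≤ Imax ^ 2 := by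
    have : B ⬝ᵥ B = B 0 ^ 2 + B 1 ^ 2 := by
      simp [dotProduct, Fin.sum_univ_two]; ring
    linarith [this ▸ hB]
  obtain ⟨u, v, hb, h1, h2⟩ := key13 R ω L Imax (E 0) (E 1) (A 0) (A 1) (B 0) (B 1)
    l m hR he hA' hB' hl hm hlm
  refine ⟨![u, v], ?_, ?_⟩
  · have : (![u, v] : Fin 2 → ℝ) ⬝ᵥ ![u, v] = u^2 + v^2 := by
      simp [dotProduct, Fin.sum_univ_two]; ring
    rw [this]; exact hb
  · have hF : Jᵀ.mulVec E = ![-(E 1), E 0] := by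
      subst hJ
      funext i
      fin_cases i <;> simp [Matrix.mulVec, dotProduct, Fin.sum_univ_two]
    simp only [hF, Prod.ext_iff, Prod.smul_mk, Prod.mk_add_mk, smul_eq_mul,
      dotProduct, Fin.sum_univ_two, Matrix.cons_val_zero, Matrix.cons_val_one,
      Matrix.head_cons]
    constructor
    · linear_combination h1.symm
    · linear_combination h2.symm
end

section
/- Let E ∈ ℝ² be nonzero, R > 0, L > 0, ω ≠ 0, Imax > 0, A = [[−R/L, ω], [−ω, −R/L]]. For I ∈ ℝ² with ‖I‖ ≤ Imax define P(I) = (3/2)R‖I‖² + (3/2)E·I and W(I) = (R²+ω²L²)‖I‖² + 2(AᵀE)·I + ‖E‖². Then { (P(I), W(I)) : ‖I‖ ≤ Imax } ⊆ ℝ² is convex. -/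
open Matrix

set_option maxHeartbeats 1000000

theorem stmt14 (R L ω Imax : ℝ) (hR : 0 < R) (hL : 0 < L) (hω : ω ≠ 0)
    (hImax : 0 < Imax) (E : Fin 2 → ℝ) (hE : E ≠ 0)
    (A : Matrix (Fin 2) (Fin 2) ℝ) (hA : A = !![-(R / L), ω; -ω, -(R / L)]) :
    Convex ℝ {p : ℝ × ℝ | ∃ I : Fin 2 → ℝ, I ⬝ᵥ I ≤ Imax ^ 2 ∧
      p = ((3 / 2) * R * (I ⬝ᵥ I) + (3 / 2) * (E ⬝ᵥ I),
           (R ^ 2 + ω ^ 2 * L ^ 2) * (I ⬝ᵥ I) + 2 * ((Aᵀ.mulVec E) ⬝ᵥ I) + E ⬝ᵥ E)} := by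
  have hLne : L ≠ 0 := hL.ne'
  have hb0 : (Aᵀ.mulVec E) 0 = -(R/L) * E 0 + -ω * E 1 := by
    simp [hA, Matrix.mulVec, dotProduct, Fin.sum_univ_two]
  have hb1 : (Aᵀ.mulVec E) 1 = ω * E 0 + -(R/L) * E 1 := by
    simp [hA, Matrix.mulVec, dotProduct, Fin.sum_univ_two]
  have hE2 : 0 < E 0 ^ 2 + E 1 ^ 2 := by
    rcases Function.ne_iff.mp hE with ⟨i, hi⟩
    fin_cases i <;> simp only [Pi.zero_apply] at hi <;> positivity
  have hE2ne : E 0 ^ 2 + E 1 ^ 2 ≠ 0 := hE2.ne'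
  obtain ⟨k, hk⟩ : ∃ k : ℝ, k = (R ^ 2 + ω ^ 2 * L ^ 2) / 2 := ⟨_, rfl⟩
  obtain ⟨w0, w1, hw1, hw2⟩ : ∃ w0 w1 : ℝ,
      E 0 * w0 + E 1 * w1 = R ∧
      (Aᵀ.mulVec E) 0 * w0 + (Aᵀ.mulVec E) 1 * w1 = k := by
    refine ⟨((ω * E 0 + -(R/L) * E 1) * R - E 1 * k) / (ω * (E 0 ^ 2 + E 1 ^ 2)),
      (E 0 * k - (-(R/L) * E 0 + -ω * E 1) * R) / (ω * (E 0 ^ 2 + E 1 ^ 2)), ?_, ?_⟩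
    · field_simp
      ring
    · rw [hb0, hb1]
      field_simp
      ring
  rintro p ⟨I₁, hI₁, rfl⟩ p' ⟨I₂, hI₂, rfl⟩ lam mu hlam hmu hlm
  obtain ⟨q₁, hq₁d⟩ : ∃ q : ℝ, q = I₁ 0 ^ 2 + I₁ 1 ^ 2 := ⟨_, rfl⟩
  obtain ⟨q₂, hq₂d⟩ : ∃ q : ℝ, q = I₂ 0 ^ 2 + I₂ 1 ^ 2 := ⟨_, rfl⟩
  have hq1 : I₁ ⬝ᵥ I₁ = q₁ := by
    rw [hq₁d]; simp [dotProduct, Fin.sum_univ_two]; ring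
  have hq2 : I₂ ⬝ᵥ I₂ = q₂ := by
    rw [hq₂d]; simp [dotProduct, Fin.sum_univ_two]; ring
  rw [hq1] at hI₁
  rw [hq2] at hI₂
  have hq10 : 0 ≤ q₁ := by rw [hq₁d]; positivity
  have hq20 : 0 ≤ q₂ := by rw [hq₂d]; positivity
  obtain ⟨y0, hy0⟩ : ∃ y : ℝ, y = lam * (I₁ 0 + q₁ * w0) + mu * (I₂ 0 + q₂ * w0) := ⟨_, rfl⟩
  obtain ⟨y1, hy1⟩ : ∃ y : ℝ, y = lam * (I₁ 1 + q₁ * w1) + mu * (I₂ 1 + q₂ * w1) := ⟨_, rfl⟩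
  have ht0 : 0 ≤ lam * q₁ + mu * q₂ :=
    add_nonneg (mul_nonneg hlam hq10) (mul_nonneg hmu hq20)
  have htI : lam * q₁ + mu * q₂ ≤ Imax ^ 2 := by nlinarith
  obtain ⟨g, hg⟩ : ∃ g : ℝ → ℝ, g = fun s => (y0 - s * w0) ^ 2 + (y1 - s * w1) ^ 2 - s :=
    ⟨_, rfl⟩
  have hgc : Continuous g := by rw [hg]; fun_prop
  have hg0 : 0 ≤ g 0 := by simp only [hg, zero_mul, mul_zero, sub_zero]; positivity
  have hgt : g (lam * q₁ + mu * q₂) ≤ 0 := by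
    have e0 : y0 - (lam * q₁ + mu * q₂) * w0 = lam * I₁ 0 + mu * I₂ 0 := by
      rw [hy0]; ring
    have e1 : y1 - (lam * q₁ + mu * q₂) * w1 = lam * I₁ 1 + mu * I₂ 1 := by
      rw [hy1]; ring
    have hgeq : g (lam * q₁ + mu * q₂)
        = (lam * I₁ 0 + mu * I₂ 0) ^ 2 + (lam * I₁ 1 + mu * I₂ 1) ^ 2
          - (lam * q₁ + mu * q₂) := by
      simp only [hg]; rw [e0, e1]
    rw [hgeq, hq₁d, hq₂d]
    nlinarith [mul_nonneg (mul_nonneg hlam hmu)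
      (add_nonneg (sq_nonneg (I₁ 0 - I₂ 0)) (sq_nonneg (I₁ 1 - I₂ 1)))]
  obtain ⟨s, ⟨hs0, hst⟩, hgs⟩ :=
    intermediate_value_Icc' ht0 hgc.continuousOn ⟨hgt, hg0⟩
  have hseq : (y0 - s * w0) ^ 2 + (y1 - s * w1) ^ 2 = s := by
    have h := hgs
    simp only [hg] at h
    linarith
  have hdot : (![y0 - s * w0, y1 - s * w1] : Fin 2 → ℝ) ⬝ᵥ ![y0 - s * w0, y1 - s * w1] = s := by
    simp [dotProduct, Fin.sum_univ_two]
    linear_combination hseq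
  refine ⟨![y0 - s * w0, y1 - s * w1], ?_, ?_⟩
  · rw [hdot]; linarith
  · have hEd : E ⬝ᵥ ![y0 - s * w0, y1 - s * w1]
        = E 0 * (y0 - s * w0) + E 1 * (y1 - s * w1) := by
      simp [dotProduct, Fin.sum_univ_two]
    have hbd : (Aᵀ.mulVec E) ⬝ᵥ ![y0 - s * w0, y1 - s * w1]
        = (Aᵀ.mulVec E) 0 * (y0 - s * w0) + (Aᵀ.mulVec E) 1 * (y1 - s * w1) := by
      simp [dotProduct, Fin.sum_univ_two]
    have hE1d : E ⬝ᵥ I₁ = E 0 * I₁ 0 + E 1 * I₁ 1 := by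
      simp [dotProduct, Fin.sum_univ_two]
    have hE2d : E ⬝ᵥ I₂ = E 0 * I₂ 0 + E 1 * I₂ 1 := by
      simp [dotProduct, Fin.sum_univ_two]
    have hb1d : (Aᵀ.mulVec E) ⬝ᵥ I₁ = (Aᵀ.mulVec E) 0 * I₁ 0 + (Aᵀ.mulVec E) 1 * I₁ 1 := by
      simp [dotProduct, Fin.sum_univ_two]
    have hb2d : (Aᵀ.mulVec E) ⬝ᵥ I₂ = (Aᵀ.mulVec E) 0 * I₂ 0 + (Aᵀ.mulVec E) 1 * I₂ 1 := by
      simp [dotProduct, Fin.sum_univ_two]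
    simp only [Prod.smul_mk, Prod.mk_add_mk, smul_eq_mul, Prod.mk.injEq,
      hq1, hq2, hdot, hEd, hbd, hE1d, hE2d, hb1d, hb2d]
    constructor
    · linear_combination (-3/2 * E 0) * hy0 + (-3/2 * E 1) * hy1 +
        (3/2 * (s - (lam * q₁ + mu * q₂))) * hw1
    · linear_combination (-2 * (Aᵀ.mulVec E) 0) * hy0 + (-2 * (Aᵀ.mulVec E) 1) * hy1 +
        (2 * (s - (lam * q₁ + mu * q₂))) * hw2 +
        (2 * (s - (lam * q₁ + mu * q₂))) * hk + (E ⬝ᵥ E) * hlm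
end
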